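/- Let G = {(g_i, 𝔤_i) : 1 ≤ i ≤ l} be a pseudo-Gröbner basis of an ideal I ⊆ R[x]. For a saturated subset J ⊆ {1,...,l} set x_J = lcm(LM(g_i) : i ∈ J), 𝔠_J = Σ_{i∈J} 𝔤_i LC(g_i), choose a_i ∈ 𝔠_J⁻¹𝔤_i with 1 = Σ_{i∈J} a_i LC(g_i), and set f_J = Σ_{i∈J} a_i (x_J / LM(g_i)) g_i. Then { (f_J, 𝔠_J) : J saturated } is a strong pseudo-Gröbner basis of I. -/

import Mathlib

open MvPolynomial

attribute [local instance] MvPolynomial.algebraMvPolynomial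

noncomputable def mdeg {σ : Type*} (m : MonomialOrder σ) {K : Type*} [CommSemiring K]
    (f : MvPolynomial σ K) : σ →₀ ℕ :=
  m.toSyn.symm (f.support.sup fun d => m.toSyn d)

noncomputable def plc {σ : Type*} (m : MonomialOrder σ) {K : Type*} [CommSemiring K]
    (f : MvPolynomial σ K) : K :=
  f.coeff (mdeg m f)

/-- The least common multiple `x_J` of the leading monomials `LM(gᵢ)`, `i ∈ J`. -/
noncomputable def xJ {n l : ℕ} {K : Type*} [Field K] (m : MonomialOrder (Fin n))
    (g : Fin l → MvPolynomial (Fin n) K) (J : Finset (Fin l)) : Fin n →₀ ℕ :=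
  J.sup fun i => mdeg m (g i)

/-- `J` is saturated: if `LM(gᵢ)` divides `x_J` then `i ∈ J`. -/
def Saturated {n l : ℕ} {K : Type*} [Field K] (m : MonomialOrder (Fin n))
    (g : Fin l → MvPolynomial (Fin n) K) (J : Finset (Fin l)) : Prop :=
  ∀ i, (∃ γ, xJ m g J = mdeg m (g i) + γ) → i ∈ J

/-- The coefficient ideal `𝔠_J = ∑_{i ∈ J} 𝔤ᵢ·LC(gᵢ)`. -/
noncomputable def cJ {R : Type*} [CommRing R] [IsDomain R] [IsDedekindDomain R]
    {n l : ℕ} (m : MonomialOrder (Fin n))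
    (g : Fin l → MvPolynomial (Fin n) (FractionRing R))
    (𝔤 : Fin l → FractionalIdeal (nonZeroDivisors R) (FractionRing R))
    (J : Finset (Fin l)) : FractionalIdeal (nonZeroDivisors R) (FractionRing R) :=
  ∑ i ∈ J, 𝔤 i * FractionalIdeal.spanSingleton (nonZeroDivisors R) (plc m (g i))

/-- The polynomial `f_J = ∑_{i ∈ J} aᵢ (x_J / LM(gᵢ)) gᵢ`. -/
noncomputable def fJ {n l : ℕ} {K : Type*} [Field K] (m : MonomialOrder (Fin n))
    (g : Fin l → MvPolynomial (Fin n) K) (a : Fin l → K) (J : Finset (Fin l)) :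
    MvPolynomial (Fin n) K :=
  ∑ i ∈ J, monomial (xJ m g J - mdeg m (g i)) (a i) * g i


section Aux

lemma toSyn_mdeg {σ : Type*} (m : MonomialOrder σ) {K : Type*} [CommSemiring K]
    (f : MvPolynomial σ K) :
    m.toSyn (mdeg m f) = f.support.sup fun d => m.toSyn d := by
  simp [mdeg]

lemma le_toSyn_mdeg {σ : Type*} (m : MonomialOrder σ) {K : Type*} [CommSemiring K]
    {f : MvPolynomial σ K} {d : σ →₀ ℕ} (h : d ∈ f.support) :
    m.toSyn d ≤ m.toSyn (mdeg m f) := by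
  rw [toSyn_mdeg]; exact Finset.le_sup h

lemma mdeg_mem_support {σ : Type*} (m : MonomialOrder σ) {K : Type*} [CommSemiring K]
    {f : MvPolynomial σ K} (hf : f ≠ 0) : mdeg m f ∈ f.support := by
  have hs : f.support.Nonempty := Finset.nonempty_iff_ne_empty.mpr (fun h => hf (support_eq_empty.mp h))
  obtain ⟨d, hd, hsup⟩ := Finset.exists_mem_eq_sup f.support hs fun d => m.toSyn d
  have : mdeg m f = d := by rw [mdeg, hsup]; exact m.toSyn.symm_apply_apply d
  rwa [this]

lemma plc_ne_zero {σ : Type*} (m : MonomialOrder σ) {K : Type*} [CommSemiring K]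
    {f : MvPolynomial σ K} (hf : f ≠ 0) : plc m f ≠ 0 :=
  MvPolynomial.mem_support_iff.mp (mdeg_mem_support m hf)

lemma mdeg_C_mul {σ : Type*} (m : MonomialOrder σ) {K : Type*} [Field K]
    (c : K) (hc : c ≠ 0) (f : MvPolynomial σ K) :
    mdeg m (C c * f) = mdeg m f := by
  unfold mdeg
  rw [← smul_eq_C_mul, support_smul_eq hc]

lemma plc_C_mul {σ : Type*} (m : MonomialOrder σ) {K : Type*} [Field K]
    (c : K) (hc : c ≠ 0) (f : MvPolynomial σ K) :
    plc m (C c * f) = c * plc m f := by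
  unfold plc
  rw [mdeg_C_mul m c hc, coeff_C_mul]

lemma coeff_xJ_fJ {n l : ℕ} (m : MonomialOrder (Fin n)) {K : Type*} [Field K]
    (g : Fin l → MvPolynomial (Fin n) K) (a : Fin l → K) (J : Finset (Fin l)) :
    (fJ m g a J).coeff (xJ m g J) = ∑ i ∈ J, a i * plc m (g i) := by
  rw [fJ, coeff_sum]
  refine Finset.sum_congr rfl fun i hi => ?_
  have hle : mdeg m (g i) ≤ xJ m g J := by
    rw [xJ]; exact Finset.le_sup (f := fun i => mdeg m (g i)) hi
  rw [coeff_monomial_mul', if_pos tsub_le_self, tsub_tsub_cancel_of_le hle]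
  rfl

lemma mdeg_fJ_le {n l : ℕ} (m : MonomialOrder (Fin n)) {K : Type*} [Field K]
    (g : Fin l → MvPolynomial (Fin n) K) (a : Fin l → K) (J : Finset (Fin l))
    {d : Fin n →₀ ℕ} (hd : d ∈ (fJ m g a J).support) :
    m.toSyn d ≤ m.toSyn (xJ m g J) := by
  classical
  have := support_sum hd
  rw [Finset.mem_biUnion] at this
  obtain ⟨i, hi, hdi⟩ := this
  have hmul := support_mul _ _ hdi
  rw [Finset.mem_add] at hmul
  obtain ⟨u, hu, v, hv, rfl⟩ := hmul
  have hu' : u = xJ m g J - mdeg m (g i) := by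
    have := support_monomial_subset hu
    simpa using this
  have hle : mdeg m (g i) ≤ xJ m g J := by
    rw [xJ]; exact Finset.le_sup (f := fun i => mdeg m (g i)) hi
  have hv' : m.toSyn v ≤ m.toSyn (mdeg m (g i)) := le_toSyn_mdeg m hv
  calc m.toSyn (u + v) = m.toSyn u + m.toSyn v := map_add _ _ _
    _ ≤ m.toSyn u + m.toSyn (mdeg m (g i)) := by exact add_le_add_right hv' _
    _ = m.toSyn (u + mdeg m (g i)) := (map_add _ _ _).symm
    _ = m.toSyn (xJ m g J) := by rw [hu', tsub_add_cancel_of_le hle]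

lemma mdeg_fJ {n l : ℕ} (m : MonomialOrder (Fin n)) {K : Type*} [Field K]
    (g : Fin l → MvPolynomial (Fin n) K) (a : Fin l → K) (J : Finset (Fin l))
    (h1 : ∑ i ∈ J, a i * plc m (g i) = 1) :
    mdeg m (fJ m g a J) = xJ m g J ∧ plc m (fJ m g a J) = 1 := by
  have hc : (fJ m g a J).coeff (xJ m g J) = 1 := by rw [coeff_xJ_fJ, h1]
  have hmem : xJ m g J ∈ (fJ m g a J).support := mem_support_iff.mpr (by simp [hc])
  have hne : fJ m g a J ≠ 0 := fun h => by simp [h] at hc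
  have h2 : m.toSyn (mdeg m (fJ m g a J)) = m.toSyn (xJ m g J) :=
    le_antisymm (mdeg_fJ_le m g a J (mdeg_mem_support m hne)) (le_toSyn_mdeg m hmem)
  have h3 : mdeg m (fJ m g a J) = xJ m g J := m.toSyn.injective h2
  exact ⟨h3, by rw [plc, h3, hc]⟩

lemma coeSubmodule_sum {R : Type*} [CommRing R] {K : Type*} [Field K] [Algebra R K]
    {ι : Type*} (s : Finset ι) (F : ι → FractionalIdeal (nonZeroDivisors R) K) :
    ((∑ j ∈ s, F j : FractionalIdeal (nonZeroDivisors R) K) : Submodule R K)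
      = ∑ j ∈ s, (F j : Submodule R K) := by
  classical
  induction s using Finset.induction with
  | empty => simp
  | insert _ _ h ih => simp [Finset.sum_insert h, ih]

end Aux

/-- Let `G = {(gᵢ, 𝔤ᵢ)}` be a pseudo-Gröbner basis of an ideal
`I ⊆ R[x]`. For each saturated `J` choose `aᵢ ∈ 𝔠_J⁻¹𝔤ᵢ` with `1 = ∑_{i∈J} aᵢ LC(gᵢ)`
and set `f_J = ∑_{i∈J} aᵢ (x_J / LM(gᵢ)) gᵢ`. Then `{(f_J, 𝔠_J) : J saturated}` is a
strong pseudo-Gröbner basis of `I`. -/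
theorem stmt14 {R : Type*} [CommRing R] [IsDomain R] [IsDedekindDomain R] {n l : ℕ}
    (m : MonomialOrder (Fin n))
    (I : Ideal (MvPolynomial (Fin n) R))
    (g : Fin l → MvPolynomial (Fin n) (FractionRing R))
    (𝔤 : Fin l → FractionalIdeal (nonZeroDivisors R) (FractionRing R))
    (hg : ∀ i, g i ≠ 0) (h𝔤 : ∀ i, 𝔤 i ≠ 0)
    (hpg : ∀ i, ∀ c ∈ 𝔤 i, ∀ d, c * (g i).coeff d ∈
      (1 : FractionalIdeal (nonZeroDivisors R) (FractionRing R)))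
    (hGI : ∀ i, ∀ c ∈ 𝔤 i, C c * g i ∈
      I.map (Algebra.linearMap (MvPolynomial (Fin n) R) (MvPolynomial (Fin n) (FractionRing R))))
    (hGB : Submodule.span (MvPolynomial (Fin n) R)
        {x : MvPolynomial (Fin n) (FractionRing R) |
          ∃ p ∈ I.map (Algebra.linearMap (MvPolynomial (Fin n) R)
            (MvPolynomial (Fin n) (FractionRing R))),
            x = monomial (mdeg m p) (plc m p)} =
      Submodule.span (MvPolynomial (Fin n) R)
        (⋃ i, {x : MvPolynomial (Fin n) (FractionRing R) |
          ∃ c ∈ 𝔤 i, x = C c * monomial (mdeg m (g i)) (plc m (g i))}))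
    (a : Finset (Fin l) → Fin l → FractionRing R)
    (ha : ∀ J : Finset (Fin l), J.Nonempty → Saturated m g J →
      (∀ i ∈ J, a J i ∈ (cJ m g 𝔤 J)⁻¹ * 𝔤 i) ∧
      (1 : FractionRing R) = ∑ i ∈ J, a J i * plc m (g i)) :
    (∀ J : Finset (Fin l), J.Nonempty → Saturated m g J →
      ∀ c ∈ cJ m g 𝔤 J, C c * fJ m g (a J) J ∈
        I.map (Algebra.linearMap (MvPolynomial (Fin n) R)
          (MvPolynomial (Fin n) (FractionRing R)))) ∧
    (∀ (f : MvPolynomial (Fin n) (FractionRing R))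
      (𝔣 : FractionalIdeal (nonZeroDivisors R) (FractionRing R)),
      f ≠ 0 → 𝔣 ≠ 0 →
      (∀ c ∈ 𝔣, C c * f ∈
        I.map (Algebra.linearMap (MvPolynomial (Fin n) R)
          (MvPolynomial (Fin n) (FractionRing R)))) →
      ∃ J : Finset (Fin l), J.Nonempty ∧ Saturated m g J ∧
        (∃ γ, mdeg m f = mdeg m (fJ m g (a J) J) + γ) ∧
        𝔣 * FractionalIdeal.spanSingleton (nonZeroDivisors R) (plc m f) ≤
          cJ m g 𝔤 J *
            FractionalIdeal.spanSingleton (nonZeroDivisors R) (plc m (fJ m g (a J) J)))  := by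
  classical
  -- the family of "degree-truncated" coefficient submodules
  set S : (Fin n →₀ ℕ) → Submodule R (FractionRing R) := fun d =>
    ∑ i ∈ Finset.univ.filter (fun i => mdeg m (g i) ≤ d),
      ((𝔤 i * FractionalIdeal.spanSingleton (nonZeroDivisors R) (plc m (g i)) :
        FractionalIdeal (nonZeroDivisors R) (FractionRing R)) :
          Submodule R (FractionRing R)) with hS
  have Smono : ∀ {v d : Fin n →₀ ℕ}, v ≤ d → S v ≤ S d := by
    intro v d hvd
    refine Finset.sum_le_sum_of_subset_of_nonneg ?_ (fun _ _ _ => bot_le)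
    intro i hi
    rw [Finset.mem_filter] at hi ⊢
    exact ⟨hi.1, hi.2.trans hvd⟩
  -- key coefficient lemma for elements of the span of the leading terms of the gᵢ
  have key : ∀ (x : MvPolynomial (Fin n) (FractionRing R)),
      x ∈ Submodule.span (MvPolynomial (Fin n) R)
        (⋃ i, {x : MvPolynomial (Fin n) (FractionRing R) |
          ∃ c ∈ 𝔤 i, x = C c * monomial (mdeg m (g i)) (plc m (g i))}) →
      ∀ d, x.coeff d ∈ S d := by
    intro x hx
    induction hx using Submodule.span_induction with
    | mem x h =>
      intro d
      rw [Set.mem_iUnion] at h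
      obtain ⟨i, c, hc, rfl⟩ := h
      rw [C_mul_monomial, coeff_monomial]
      split_ifs with hd
      · subst hd
        have hfil : i ∈ Finset.univ.filter
            (fun j => mdeg m (g j) ≤ mdeg m (g i)) := by
          simp
        refine Finset.single_le_sum (f := fun i =>
          ((𝔤 i * FractionalIdeal.spanSingleton (nonZeroDivisors R) (plc m (g i)) :
            FractionalIdeal (nonZeroDivisors R) (FractionRing R)) :
              Submodule R (FractionRing R))) (fun _ _ => bot_le) hfil ?_
        exact FractionalIdeal.mem_coe.mpr
          (FractionalIdeal.mul_mem_mul hc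
            (FractionalIdeal.mem_spanSingleton_self _ _))
      · exact zero_mem _
    | zero => intro d; simp only [coeff_zero]; exact zero_mem _
    | add x y hx hy ihx ihy =>
      intro d
      rw [coeff_add]
      exact add_mem (ihx d) (ihy d)
    | smul p x hx ih =>
      intro d
      have hps : p • x = MvPolynomial.map (algebraMap R (FractionRing R)) p * x := by
        rw [Algebra.smul_def, MvPolynomial.algebraMap_def]
      rw [hps, coeff_mul]
      refine Submodule.sum_mem _ ?_
      rintro ⟨u, v⟩ huv
      rw [Finset.HasAntidiagonal.mem_antidiagonal] at huv
      have hv : v ≤ d := huv ▸ le_add_self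
      rw [coeff_map, ← Algebra.smul_def]
      exact Submodule.smul_mem _ _ (Smono hv (ih v))
  constructor
  · -- part 1
    intro J hJne hJsat c hc
    obtain ⟨haJ, hsum⟩ := ha J hJne hJsat
    -- cJ is nonzero
    obtain ⟨i₀, hi₀⟩ := hJne
    obtain ⟨x₀, hx₀, hx₀0⟩ : ∃ x ∈ 𝔤 i₀, x ≠ 0 := by
      by_contra hcon
      push_neg at hcon
      exact h𝔤 i₀ (FractionalIdeal.eq_zero_iff.mpr hcon)
    have hcJ0 : cJ m g 𝔤 J ≠ 0 := by
      intro h0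
      have hmem : x₀ * plc m (g i₀) ∈ cJ m g 𝔤 J := by
        have h1 : x₀ * plc m (g i₀) ∈
            𝔤 i₀ * FractionalIdeal.spanSingleton (nonZeroDivisors R) (plc m (g i₀)) :=
          FractionalIdeal.mul_mem_mul hx₀
            (FractionalIdeal.mem_spanSingleton_self _ _)
        rw [← FractionalIdeal.mem_coe, cJ, coeSubmodule_sum]
        exact Finset.single_le_sum (f := fun i =>
          ((𝔤 i * FractionalIdeal.spanSingleton (nonZeroDivisors R) (plc m (g i)) :
            FractionalIdeal (nonZeroDivisors R) (FractionRing R)) :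
              Submodule R (FractionRing R))) (fun _ _ => bot_le) hi₀
          (FractionalIdeal.mem_coe.mpr h1)
      rw [h0, FractionalIdeal.mem_zero_iff] at hmem
      exact mul_ne_zero hx₀0 (plc_ne_zero m (hg i₀)) hmem
    have hmemg : ∀ i ∈ J, c * a J i ∈ 𝔤 i := by
      intro i hi
      have h1 := FractionalIdeal.mul_mem_mul hc (haJ i hi)
      rwa [← mul_assoc, mul_inv_cancel₀ hcJ0, one_mul] at h1
    rw [fJ, Finset.mul_sum]
    refine Submodule.sum_mem _ fun i hi => ?_
    have h1 : C c * (monomial (xJ m g J - mdeg m (g i)) (a J i) * g i)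
        = (monomial (xJ m g J - mdeg m (g i)) (1 : R)) •
          (C (c * a J i) * g i) := by
      rw [Algebra.smul_def, MvPolynomial.algebraMap_def, map_monomial, map_one,
        ← mul_assoc, ← mul_assoc, C_mul_monomial]
      congr 1
      rw [C_apply, monomial_mul, add_zero, one_mul]
    rw [h1]
    exact Submodule.smul_mem _ _ (hGI i _ (hmemg i hi))
  · -- part 2
    intro f 𝔣 hf h𝔣 hmemI
    set J : Finset (Fin l) :=
      Finset.univ.filter (fun i => mdeg m (g i) ≤ mdeg m f) with hJdef
    have hcoe : (cJ m g 𝔤 J : Submodule R (FractionRing R)) = S (mdeg m f) := by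
      rw [cJ, coeSubmodule_sum, hS]
    have hkey : ∀ c ∈ 𝔣, c * plc m f ∈ cJ m g 𝔤 J := by
      intro c hc
      by_cases hc0 : c = 0
      · rw [hc0, zero_mul]
        exact FractionalIdeal.mem_coe.mp (Submodule.zero_mem _)
      have hp := hmemI c hc
      have hx : monomial (mdeg m f) (c * plc m f) ∈
          Submodule.span (MvPolynomial (Fin n) R)
            {x : MvPolynomial (Fin n) (FractionRing R) |
              ∃ p ∈ I.map (Algebra.linearMap (MvPolynomial (Fin n) R)
                (MvPolynomial (Fin n) (FractionRing R))),
                x = monomial (mdeg m p) (plc m p)} := by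
        apply Submodule.subset_span
        exact ⟨C c * f, hp, by rw [mdeg_C_mul m c hc0, plc_C_mul m c hc0]⟩
      rw [hGB] at hx
      have h2 := key _ hx (mdeg m f)
      rw [coeff_monomial, if_pos rfl] at h2
      rw [← FractionalIdeal.mem_coe, hcoe]
      exact h2
    -- J is nonempty
    obtain ⟨c₀, hc₀, hc₀0⟩ : ∃ x ∈ 𝔣, x ≠ 0 := by
      by_contra hcon
      push_neg at hcon
      exact h𝔣 (FractionalIdeal.eq_zero_iff.mpr hcon)
    have hJne : J.Nonempty := by
      rw [Finset.nonempty_iff_ne_empty]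
      intro hempty
      have h0 := hkey c₀ hc₀
      rw [cJ, hempty, Finset.sum_empty, FractionalIdeal.mem_zero_iff] at h0
      exact mul_ne_zero hc₀0 (plc_ne_zero m hf) h0
    have hxJle : xJ m g J ≤ mdeg m f := by
      rw [xJ]
      exact Finset.sup_le fun i hi => (Finset.mem_filter.mp hi).2
    have hJsat : Saturated m g J := by
      intro i ⟨γ, hγ⟩
      have h1 : mdeg m (g i) ≤ xJ m g J := le_iff_exists_add.mpr ⟨γ, hγ⟩
      rw [hJdef, Finset.mem_filter]
      exact ⟨Finset.mem_univ i, h1.trans hxJle⟩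
    obtain ⟨haJ, hsum⟩ := ha J hJne hJsat
    obtain ⟨hdeg, hplc⟩ := mdeg_fJ m g (a J) J hsum.symm
    refine ⟨J, hJne, hJsat, ?_, ?_⟩
    · rw [hdeg]
      exact le_iff_exists_add.mp hxJle
    · rw [hplc, FractionalIdeal.spanSingleton_one, mul_one]
      refine FractionalIdeal.mul_le.mpr fun c hc y hy => ?_
      obtain ⟨z, rfl⟩ := (FractionalIdeal.mem_spanSingleton _).mp hy
      rw [mul_comm c, smul_mul_assoc, mul_comm (plc m f) c]
      rw [← FractionalIdeal.mem_coe]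
      exact Submodule.smul_mem _ _ (FractionalIdeal.mem_coe.mpr (hkey c hc))
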